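/- Suppose a stationary d-dimensional sequence X has multivariate extremal index θ(τ) with respect to levels u_n satisfying n·P(⋃_{j=1}^d {X_{1,j} > u_{n,j}}) → T > 0 and n·P(⋃_{j=1}^d {X_{1,j} ≤ u_{n,j} < X_{2,j}}) → V > 0, and that X has multivariate upcrossings index η(ν) with respect to the same levels. Then η(ν) = (T/V)·θ(τ). In particular, since by definition both indices lie in [0,1] and the upcrossing event at time 1 implies the exceedance event at time 2, one has V ≤ T and hence θ(τ) ≤ η(ν)·(V/T). -/

import Mathlib

open MeasureTheory ProbabilityTheory Filter Set

theorem stmt5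
    {Ω : Type*} [MeasurableSpace Ω] (P : Measure Ω) [IsProbabilityMeasure P]
    {d : ℕ} (hd : 0 < d)
    (X : ℕ → Ω → (Fin d → ℝ)) (hXm : ∀ i, Measurable (X i))
    (hstat : Measure.map (fun ω => fun i : ℕ => X (i + 1) ω) P
      = Measure.map (fun ω => fun i : ℕ => X i ω) P)
    (u : ℕ → Fin d → ℝ)
    (T V θ η : ℝ) (hT : 0 < T) (hV : 0 < V)
    (hθ01 : θ ∈ Icc (0:ℝ) 1) (hη01 : η ∈ Icc (0:ℝ) 1)
    -- n · P(⋃ⱼ {X_{1,j} > u_{n,j}}) → T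
    (hTlim : Tendsto (fun n : ℕ => (n : ℝ) * (P {ω | ∃ j, u n j < X 1 ω j}).toReal)
      atTop (nhds T))
    -- n · P(⋃ⱼ {X_{1,j} ≤ u_{n,j} < X_{2,j}}) → V
    (hVlim : Tendsto (fun n : ℕ =>
        (n : ℝ) * (P {ω | ∃ j, X 1 ω j ≤ u n j ∧ u n j < X 2 ω j}).toReal)
      atTop (nhds V))
    -- multivariate extremal index θ: P(Mₙ ≤ uₙ) → Ψ̂(τ)^θ with Ψ̂(τ) = exp (−T)
    (hθlim : Tendsto (fun n : ℕ =>
        (P {ω | ∀ i ∈ Finset.Icc 1 n, ∀ j, X i ω j ≤ u n j}).toReal)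
      atTop (nhds (Real.exp (-(θ * T)))))
    -- multivariate upcrossings index η: P(no upcrossing in 1..n) → φ(ν)^η with φ(ν) = exp (−V)
    (hηlim : Tendsto (fun n : ℕ =>
        (P {ω | ∀ i ∈ Finset.Icc 1 n, ∀ j,
          ¬(X i ω j ≤ u n j ∧ u n j < X (i + 1) ω j)}).toReal)
      atTop (nhds (Real.exp (-(η * V))))) :
    η = (T / V) * θ ∧ V ≤ T ∧ θ ≤ η * (V / T) := by
  classical
  -- path map and shift
  set path : Ω → (ℕ → Fin d → ℝ) := fun ω i => X i ω with hpath
  have hpathm : Measurable path := measurable_pi_lambda _ fun i => hXm i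
  set shift : (ℕ → Fin d → ℝ) → (ℕ → Fin d → ℝ) := fun f i => f (i + 1) with hshift
  have hshiftm : Measurable shift := measurable_pi_lambda _ fun i => measurable_pi_apply (i + 1)
  have hiterm : ∀ k, Measurable (shift^[k]) := fun k => hshiftm.iterate k
  have hstat' : Measure.map (shift ∘ path) P = Measure.map path P := hstat
  have hshiftk : ∀ k, Measure.map (shift^[k] ∘ path) P = Measure.map path P := by
    intro k
    induction k with
    | zero => simp
    | succ k ih =>
      have h1 : shift^[k+1] ∘ path = shift^[k] ∘ (shift ∘ path) := by
        rw [Function.iterate_succ]; rfl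
      rw [h1, ← Measure.map_map (hiterm k) (hshiftm.comp hpathm), hstat',
        Measure.map_map (hiterm k) hpathm, ih]
  have hiter_apply : ∀ (k : ℕ) (f : ℕ → Fin d → ℝ) (i : ℕ), shift^[k] f i = f (i + k) := by
    intro k
    induction k with
    | zero => intro f i; simp
    | succ k ih =>
      intro f i
      rw [Function.iterate_succ_apply, ih]
      simp [hshift, Nat.add_assoc]
  have hev : ∀ (a : ℕ) (j : Fin d), Measurable fun f : ℕ → Fin d → ℝ => f a j :=
    fun a j => (measurable_pi_apply j).comp (measurable_pi_apply a)
  have htrans : ∀ (k : ℕ) (S : Set (ℕ → Fin d → ℝ)), MeasurableSet S →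
      P ((shift^[k] ∘ path) ⁻¹' S) = P (path ⁻¹' S) := by
    intro k S hS
    have h1 := congrArg (fun μ : Measure (ℕ → Fin d → ℝ) => μ S) (hshiftk k)
    simpa [Measure.map_apply ((hiterm k).comp hpathm) hS, Measure.map_apply hpathm hS] using h1
  -- transfer: upcrossing event at time n has same probability as at time 1
  have hFshift : ∀ n : ℕ, 1 ≤ n →
      P {ω | ∃ j, X n ω j ≤ u n j ∧ u n j < X (n+1) ω j}
        = P {ω | ∃ j, X 1 ω j ≤ u n j ∧ u n j < X 2 ω j} := by
    intro n hn
    set S : Set (ℕ → Fin d → ℝ) := {f | ∃ j, f 1 j ≤ u n j ∧ u n j < f 2 j} with hSdef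
    have hSm : MeasurableSet S := by
      have : S = ⋃ j, ({f : ℕ → Fin d → ℝ | f 1 j ≤ u n j} ∩ {f | u n j < f 2 j}) := by
        ext f; simp [hSdef, Set.mem_iUnion, Set.mem_setOf_eq]
      rw [this]
      exact MeasurableSet.iUnion fun j =>
        (measurableSet_le (hev 1 j) measurable_const).inter
          (measurableSet_lt measurable_const (hev 2 j))
    have e1 : 1 + (n - 1) = n := by omega
    have e2 : 2 + (n - 1) = n + 1 := by omega
    have hpre : (shift^[n-1] ∘ path) ⁻¹' S
        = {ω | ∃ j, X n ω j ≤ u n j ∧ u n j < X (n+1) ω j} := by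
      ext ω
      simp only [Set.mem_preimage, Function.comp_apply, hSdef, Set.mem_setOf_eq,
        hiter_apply, e1, e2, hpath]
    have hpre2 : path ⁻¹' S = {ω | ∃ j, X 1 ω j ≤ u n j ∧ u n j < X 2 ω j} := rfl
    rw [← hpre, ← hpre2] at *
    exact htrans (n-1) S hSm
  -- transfer: exceedance at time 2 has same probability as at time 1
  have hE2 : ∀ n : ℕ, P {ω | ∃ j, u n j < X 2 ω j} = P {ω | ∃ j, u n j < X 1 ω j} := by
    intro n
    set S : Set (ℕ → Fin d → ℝ) := {f | ∃ j, u n j < f 1 j} with hSdef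
    have hSm : MeasurableSet S := by
      have : S = ⋃ j, {f : ℕ → Fin d → ℝ | u n j < f 1 j} := by
        ext f; simp [hSdef, Set.mem_iUnion, Set.mem_setOf_eq]
      rw [this]
      exact MeasurableSet.iUnion fun j => measurableSet_lt measurable_const (hev 1 j)
    have hpre : (shift^[1] ∘ path) ⁻¹' S = {ω | ∃ j, u n j < X 2 ω j} := by
      ext ω
      simp only [Set.mem_preimage, Function.comp_apply, hSdef, Set.mem_setOf_eq, hiter_apply]
      exact Iff.rfl
    have hpre2 : path ⁻¹' S = {ω | ∃ j, u n j < X 1 ω j} := rfl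
    rw [← hpre, ← hpre2]
    exact htrans 1 S hSm
  -- abbreviations
  set A : ℕ → Set Ω := fun n => {ω | ∀ i ∈ Finset.Icc 1 n, ∀ j, X i ω j ≤ u n j} with hA
  set B : ℕ → Set Ω := fun n => {ω | ∀ i ∈ Finset.Icc 1 n, ∀ j,
      ¬(X i ω j ≤ u n j ∧ u n j < X (i + 1) ω j)} with hB
  set E : ℕ → Set Ω := fun n => {ω | ∃ j, u n j < X 1 ω j} with hE
  set F : ℕ → Set Ω := fun n => {ω | ∃ j, X 1 ω j ≤ u n j ∧ u n j < X 2 ω j} with hF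
  set F' : ℕ → Set Ω := fun n => {ω | ∃ j, X n ω j ≤ u n j ∧ u n j < X (n+1) ω j} with hF'
  -- inclusion: A n \ B n ⊆ F' n (for n ≥ 1)
  have hAB : ∀ n : ℕ, 1 ≤ n → A n \ B n ⊆ F' n := by
    intro n hn ω hω
    obtain ⟨hωA, hωB⟩ := hω
    simp only [hB, Set.mem_setOf_eq] at hωB
    push_neg at hωB
    obtain ⟨i, hi, j, h1, h2⟩ := hωB
    simp only [Finset.mem_Icc] at hi
    rcases eq_or_lt_of_le hi.2 with rfl | hlt
    · exact ⟨j, h1, h2⟩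
    · exfalso
      have : X (i+1) ω j ≤ u n j := hωA (i+1) (Finset.mem_Icc.2 ⟨by omega, by omega⟩) j
      exact absurd h2 (not_lt.2 this)
  -- inclusion: B n \ A n ⊆ E n
  have hBA : ∀ n : ℕ, B n \ A n ⊆ E n := by
    intro n ω hω
    obtain ⟨hωB, hωA⟩ := hω
    simp only [hA, Set.mem_setOf_eq] at hωA
    push_neg at hωA
    obtain ⟨i, hi, j, hij⟩ := hωA
    simp only [Finset.mem_Icc] at hi
    -- claim: for all 1 ≤ m ≤ n with u < X m, also u < X 1
    have key : ∀ m : ℕ, 1 ≤ m → m ≤ n → u n j < X m ω j → u n j < X 1 ω j := by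
      intro m hm
      induction m, hm using Nat.le_induction with
      | base => intro _ h; exact h
      | succ m hm ih =>
        intro hmn hlt
        have hnu : ¬(X m ω j ≤ u n j ∧ u n j < X (m+1) ω j) :=
          hωB m (Finset.mem_Icc.2 ⟨hm, by omega⟩) j
        have : u n j < X m ω j := by
          by_contra h
          exact hnu ⟨le_of_not_gt h, hlt⟩
        exact ih (by omega) this
    exact ⟨j, key i hi.1 hi.2 hij⟩
  -- P(E n) → 0 and P(F n) → 0
  have hfin : ∀ s : Set Ω, P s ≠ ⊤ := fun s => measure_ne_top P s
  have hPE0 : Tendsto (fun n : ℕ => (P (E n)).toReal) atTop (nhds 0) := by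
    have h1 : Tendsto (fun n : ℕ => ((n : ℝ) * (P (E n)).toReal) * (n : ℝ)⁻¹) atTop
        (nhds (T * 0)) := hTlim.mul tendsto_inv_atTop_nhds_zero_nat
    rw [mul_zero] at h1
    apply h1.congr'
    filter_upwards [eventually_ge_atTop 1] with n hn
    have : (n : ℝ) ≠ 0 := by positivity
    field_simp
  have hPF0 : Tendsto (fun n : ℕ => (P (F n)).toReal) atTop (nhds 0) := by
    have h1 : Tendsto (fun n : ℕ => ((n : ℝ) * (P (F n)).toReal) * (n : ℝ)⁻¹) atTop
        (nhds (V * 0)) := hVlim.mul tendsto_inv_atTop_nhds_zero_nat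
    rw [mul_zero] at h1
    apply h1.congr'
    filter_upwards [eventually_ge_atTop 1] with n hn
    have : (n : ℝ) ≠ 0 := by positivity
    field_simp
  -- |P(A n) - P(B n)| ≤ P(E n) + P(F n) eventually
  have hdiff : ∀ n : ℕ, 1 ≤ n →
      |(P (A n)).toReal - (P (B n)).toReal| ≤ (P (E n)).toReal + (P (F n)).toReal := by
    intro n hn
    have hF'F : (P (F' n)).toReal = (P (F n)).toReal := by
      rw [hFshift n hn]
    have h1 : P (A n) ≤ P (B n) + P (F' n) := by
      calc P (A n) ≤ P (B n ∪ (A n \ B n)) := measure_mono (fun ω h => by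
            by_cases hb : ω ∈ B n
            · exact Or.inl hb
            · exact Or.inr ⟨h, hb⟩)
        _ ≤ P (B n) + P (A n \ B n) := measure_union_le _ _
        _ ≤ P (B n) + P (F' n) := add_le_add le_rfl (measure_mono (hAB n hn))
    have h2 : P (B n) ≤ P (A n) + P (E n) := by
      calc P (B n) ≤ P (A n ∪ (B n \ A n)) := measure_mono (fun ω h => by
            by_cases ha : ω ∈ A n
            · exact Or.inl ha
            · exact Or.inr ⟨h, ha⟩)
        _ ≤ P (A n) + P (B n \ A n) := measure_union_le _ _
        _ ≤ P (A n) + P (E n) := add_le_add le_rfl (measure_mono (hBA n))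
    have h1' : (P (A n)).toReal ≤ (P (B n)).toReal + (P (F' n)).toReal := by
      have := ENNReal.toReal_mono (by simp [ENNReal.add_ne_top, hfin]) h1
      rwa [ENNReal.toReal_add (hfin _) (hfin _)] at this
    have h2' : (P (B n)).toReal ≤ (P (A n)).toReal + (P (E n)).toReal := by
      have := ENNReal.toReal_mono (by simp [ENNReal.add_ne_top, hfin]) h2
      rwa [ENNReal.toReal_add (hfin _) (hfin _)] at this
    rw [abs_sub_le_iff]
    constructor
    · have h0 : (0:ℝ) ≤ (P (E n)).toReal := ENNReal.toReal_nonneg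
      rw [hF'F] at h1'
      linarith
    · have h0 : (0:ℝ) ≤ (P (F n)).toReal := ENNReal.toReal_nonneg
      linarith
  -- hence P(A n) - P(B n) → 0
  have hdiff0 : Tendsto (fun n : ℕ => (P (A n)).toReal - (P (B n)).toReal) atTop (nhds 0) := by
    have hg : Tendsto (fun n : ℕ => (P (E n)).toReal + (P (F n)).toReal) atTop (nhds 0) := by
      simpa using hPE0.add hPF0
    apply squeeze_zero_norm' _ hg
    filter_upwards [eventually_ge_atTop 1] with n hn
    simpa [Real.norm_eq_abs] using hdiff n hn
  -- P(A n) → exp(-(η V)) as well, so exp(-(θ T)) = exp(-(η V))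
  have hAlim2 : Tendsto (fun n : ℕ => (P (A n)).toReal) atTop (nhds (Real.exp (-(η * V)))) := by
    have := hηlim.add hdiff0
    rw [add_zero] at this
    apply this.congr
    intro n
    ring
  have hexp : Real.exp (-(θ * T)) = Real.exp (-(η * V)) :=
    tendsto_nhds_unique hθlim hAlim2
  have hθTηV : θ * T = η * V := by
    have := Real.exp_eq_exp.mp hexp
    linarith
  -- V ≤ T
  have hVT : V ≤ T := by
    refine le_of_tendsto_of_tendsto' hVlim hTlim fun n => ?_
    have hsub : F n ⊆ {ω | ∃ j, u n j < X 2 ω j} := by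
      rintro ω ⟨j, _, h2⟩; exact ⟨j, h2⟩
    have h1 : P (F n) ≤ P (E n) := by
      calc P (F n) ≤ P {ω | ∃ j, u n j < X 2 ω j} := measure_mono hsub
        _ = P (E n) := hE2 n
    have h1' : (P (F n)).toReal ≤ (P (E n)).toReal := ENNReal.toReal_mono (hfin _) h1
    exact mul_le_mul_of_nonneg_left h1' (Nat.cast_nonneg n)
  refine ⟨?_, hVT, ?_⟩
  · field_simp
    linarith
  · have : θ = η * (V / T) := by
      field_simp
      linarith
    exact le_of_eq this
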